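/- Let M ⊆ 2^ℕ × 2^ℕ be a set that intersects every compact set C with π(C) = 2^ℕ (π the first projection), and let E = (2^ℕ × 2^ℕ) ∖ M. Assume moreover λ_t(M) = 0 for all t, where λ_t = δ_t ⊗ λ. Then the family {λ_t restricted to E : t ∈ 2^ℕ} of Borel probability measures on E is not uniformly tight: for every compact set A ⊆ E there exists t with λ_t(A) = 0. -/

import Mathlib

open MeasureTheory

abbrev Cantor : Type := ℕ → Bool

/-- If `M ⊆ 2^ℕ × 2^ℕ` meets every compact set projecting onto `2^ℕ` and is
null for every `λ_t = δ_t ⊗ λ`, then the family `{λ_t}` restricted to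
`E = (2^ℕ × 2^ℕ) ∖ M` is not uniformly tight: every compact `A ⊆ E` has
`λ_t(A) = 0` for some `t`. -/
theorem stmt19 (lam : Measure Cantor) [IsProbabilityMeasure lam]
    (M : Set (Cantor × Cantor))
    (hM : ∀ C : Set (Cantor × Cantor), IsCompact C →
      Prod.fst '' C = Set.univ → (M ∩ C).Nonempty)
    (lamt : Cantor → Measure (Cantor × Cantor))
    (hlamt : ∀ t : Cantor, lamt t = (Measure.dirac t).prod lam)
    (hMnull : ∀ t : Cantor, lamt t M = 0) :
    (∀ A : Set (Cantor × Cantor), IsCompact A → A ⊆ Mᶜ →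
      ∃ t : Cantor, lamt t A = 0) ∧
    ¬ (∀ ε : ℝ, 0 < ε → ∃ K : Set (Cantor × Cantor), IsCompact K ∧ K ⊆ Mᶜ ∧
        ∀ t : Cantor, 1 - ε ≤ (lamt t K).toReal) := by
  have main : ∀ A : Set (Cantor × Cantor), IsCompact A → A ⊆ Mᶜ →
      ∃ t : Cantor, lamt t A = 0 := by
    intro A hA hAM
    have hproj : Prod.fst '' A ≠ Set.univ := by
      intro h
      obtain ⟨x, hxM, hxA⟩ := hM A hA h
      exact hAM hxA hxM
    obtain ⟨t, ht⟩ : ∃ t, t ∉ Prod.fst '' A := by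
      by_contra h; push_neg at h; exact hproj (Set.eq_univ_of_forall h)
    refine ⟨t, le_antisymm ?_ zero_le⟩
    have hsub : A ⊆ (Prod.fst '' A) ×ˢ (Set.univ : Set Cantor) :=
      fun x hx => ⟨Set.mem_image_of_mem _ hx, trivial⟩
    calc lamt t A ≤ lamt t ((Prod.fst '' A) ×ˢ Set.univ) := measure_mono hsub
      _ = (Measure.dirac t) (Prod.fst '' A) * lam Set.univ := by
          rw [hlamt]; exact Measure.prod_prod _ _
      _ = 0 := by
          rw [Measure.dirac_apply' _ (hA.image continuous_fst).isClosed.measurableSet]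
          simp [Set.indicator_of_notMem ht]
  refine ⟨main, ?_⟩
  intro h
  obtain ⟨K, hK, hKM, hKt⟩ := h (1/2) (by norm_num)
  obtain ⟨t, ht⟩ := main K hK hKM
  have := hKt t
  rw [ht] at this
  norm_num at this
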